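/- Let A ∈ ℝ^{m×n} with ‖a_j‖ = 1 for all j ∈ [n]. Let x ∈ ℝ^n satisfy x_j ≥ 1 for all j ∈ [n]. If ‖Ax‖ < |ρ_{(A,−A)}|, where (A,−A) is the m×2n matrix obtained by concatenating the columns of A and of −A, then every coordinate of the orthogonal projection of x onto ker(A) is strictly positive. In particular, if ρ_A < 0, then the orthogonal projection of x onto ker(A) is strictly positive in every coordinate whenever ‖Ax‖ < |ρ_A|. -/

import Mathlib

open Matrix Set MeasureTheory Pointwise ENNReal

noncomputable section

/-- Euclidean dot product on `Fin d → ℝ`. -/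
def dotp {d : ℕ} (u v : Fin d → ℝ) : ℝ := ∑ i, u i * v i

/-- Euclidean norm on `Fin d → ℝ`. -/
def norm2 {d : ℕ} (v : Fin d → ℝ) : ℝ := Real.sqrt (∑ i, v i ^ 2)

/-- Normalization `v / ‖v‖`, with the convention that `0` is mapped to `0`. -/
def nml {d : ℕ} (v : Fin d → ℝ) : Fin d → ℝ := (norm2 v)⁻¹ • v

/-- The `j`-th column of a matrix. -/
def mcol {d : ℕ} {ι : Type} (A : Matrix (Fin d) ι ℝ) (j : ι) : Fin d → ℝ := fun i => A i j

/-- Goffin's condition measure `ρ_A = max_{y ∈ im(A) \ {0}} min_j â_jᵀ ŷ`. -/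
def goffin {d : ℕ} {ι : Type} [Fintype ι] (A : Matrix (Fin d) ι ℝ) : ℝ :=
  sSup { r : ℝ | ∃ y : Fin d → ℝ, (∃ x : ι → ℝ, A.mulVec x = y) ∧ y ≠ 0 ∧
    r = ⨅ j : ι, dotp (nml (mcol A j)) (nml y) }

/-- The cone `Σ_A = {y : Aᵀ y ≥ 0}`. -/
def SigmaCone {d : ℕ} {ι : Type} (A : Matrix (Fin d) ι ℝ) : Set (Fin d → ℝ) :=
  { y | ∀ j, 0 ≤ dotp (mcol A j) y }

/-- `F_A = Σ_A ∩ B^d`. -/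
def FA {d : ℕ} {ι : Type} (A : Matrix (Fin d) ι ℝ) : Set (Fin d → ℝ) :=
  SigmaCone A ∩ { z | norm2 z ≤ 1 }

/-- `‖v‖_M = √(vᵀ M v)`. -/
def qnorm {d : ℕ} (M : Matrix (Fin d) (Fin d) ℝ) (v : Fin d → ℝ) : ℝ :=
  Real.sqrt (dotp v (M.mulVec v))

/-- The ellipsoid `E(M) = {z : ‖z‖_M ≤ 1}`. -/
def ell {d : ℕ} (M : Matrix (Fin d) (Fin d) ℝ) : Set (Fin d → ℝ) :=
  { z | qnorm M z ≤ 1 }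

/-- The width of a set `X` along `a`: `sup {aᵀz : z ∈ X}`. -/
def widthOf {d : ℕ} (X : Set (Fin d → ℝ)) (a : Fin d → ℝ) : ℝ :=
  sSup { r : ℝ | ∃ z ∈ X, r = dotp a z }

/-- `P_A = conv(â_1,…,â_n) ∩ (−conv(â_1,…,â_n))`. -/
def PA {d : ℕ} {ι : Type} (A : Matrix (Fin d) ι ℝ) : Set (Fin d → ℝ) :=
  convexHull ℝ (Set.range fun j => nml (mcol A j)) ∩
    (-(convexHull ℝ (Set.range fun j => nml (mcol A j))))

/-- `Δ_A`: maximum of `∏_{j ∈ B} ‖a_j‖` over sets `B` of linearly independent columns. -/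
def DeltaA {d n : ℕ} (A : Matrix (Fin d) (Fin n) ℝ) : ℝ :=
  sSup { p : ℝ | ∃ B : Finset (Fin n),
    LinearIndependent ℝ (fun j : {x // x ∈ B} => mcol A j.1) ∧ p = ∏ j ∈ B, norm2 (mcol A j) }

/-- `T*_A`: indices `i` such that some `y` with `Aᵀy ≥ 0` has `a_iᵀ y > 0`. -/
def TstarA {d : ℕ} {ι : Type} (A : Matrix (Fin d) ι ℝ) : Set ι :=
  { i | ∃ y : Fin d → ℝ, (∀ j, 0 ≤ dotp (mcol A j) y) ∧ 0 < dotp (mcol A i) y }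

/-- `S*_A`: indices `i` such that some `x ≥ 0` with `Ax = 0` has `x_i > 0`. -/
def SstarA {d : ℕ} {ι : Type} [Fintype ι] (A : Matrix (Fin d) ι ℝ) : Set ι :=
  { i | ∃ x : ι → ℝ, (∀ j, 0 ≤ x j) ∧ A.mulVec x = 0 ∧ 0 < x i }

/-- `ω_A = min_{i ∈ T*_A} width_{F_A}(â_i)`. -/
def omegaA {d : ℕ} {ι : Type} (A : Matrix (Fin d) ι ℝ) : ℝ :=
  sInf ((fun i => widthOf (FA A) (nml (mcol A i))) '' TstarA A)

/-- `p` is the orthogonal projection of `x` onto `ker(A)` (w.r.t. the standard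
Euclidean inner product): `p ∈ ker(A)` and `x - p ⟂ ker(A)`. -/
def IsKerProj {m n : ℕ} (A : Matrix (Fin m) (Fin n) ℝ) (x p : Fin n → ℝ) : Prop :=
  A.mulVec p = 0 ∧ ∀ z : Fin n → ℝ, A.mulVec z = 0 → dotp (x - p) z = 0

-- Auxiliary lemmas ---------------------------------------------------------

lemma dotp_eq {d : ℕ} (u v : Fin d → ℝ) : dotp u v = u ⬝ᵥ v := rfl

lemma norm2_nonneg {d : ℕ} (v : Fin d → ℝ) : 0 ≤ norm2 v := Real.sqrt_nonneg _

lemma norm2_mul_self {d : ℕ} (v : Fin d → ℝ) : norm2 v * norm2 v = ∑ i, v i ^ 2 :=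
  Real.mul_self_sqrt (Finset.sum_nonneg fun i _ => sq_nonneg _)

lemma dotp_self {d : ℕ} (v : Fin d → ℝ) : dotp v v = norm2 v * norm2 v := by
  rw [norm2_mul_self]; simp [dotp, sq]

lemma norm2_eq_zero {d : ℕ} {v : Fin d → ℝ} (h : norm2 v = 0) : v = 0 := by
  have h2 : ∑ i, v i ^ 2 = 0 := by
    have := norm2_mul_self v; rw [h] at this; linarith
  funext i
  have := (Finset.sum_eq_zero_iff_of_nonneg (fun i _ => sq_nonneg (v i))).1 h2 i (Finset.mem_univ i)
  exact pow_eq_zero_iff (n := 2) (by norm_num) |>.1 this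

lemma norm2_pos {d : ℕ} {v : Fin d → ℝ} (h : v ≠ 0) : 0 < norm2 v :=
  lt_of_le_of_ne (norm2_nonneg v) (fun h' => h (norm2_eq_zero h'.symm))

lemma dotp_le_norm2 {d : ℕ} (u v : Fin d → ℝ) : dotp u v ≤ norm2 u * norm2 v := by
  have h := Finset.sum_mul_sq_le_sq_mul_sq Finset.univ u v
  have habs : dotp u v ≤ |dotp u v| := le_abs_self _
  refine habs.trans ?_
  rw [← Real.sqrt_sq_eq_abs]
  calc Real.sqrt ((dotp u v) ^ 2) ≤ Real.sqrt ((∑ i, u i ^ 2) * ∑ i, v i ^ 2) :=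
        Real.sqrt_le_sqrt h
    _ = norm2 u * norm2 v := by
        rw [Real.sqrt_mul (Finset.sum_nonneg fun i _ => sq_nonneg _)]; rfl

lemma abs_le_norm2 {d : ℕ} (v : Fin d → ℝ) (i : Fin d) : |v i| ≤ norm2 v := by
  rw [← Real.sqrt_sq_eq_abs]
  exact Real.sqrt_le_sqrt (Finset.single_le_sum (fun i _ => sq_nonneg (v i)) (Finset.mem_univ i))

lemma norm2_smul {d : ℕ} (c : ℝ) (v : Fin d → ℝ) : norm2 (c • v) = |c| * norm2 v := by
  unfold norm2
  rw [← Real.sqrt_sq_eq_abs, ← Real.sqrt_mul (sq_nonneg c)]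
  congr 1
  rw [Finset.mul_sum]
  apply Finset.sum_congr rfl; intro i _; simp [mul_pow]

lemma norm2_neg {d : ℕ} (v : Fin d → ℝ) : norm2 (-v) = norm2 v := by
  have h : -v = (-1 : ℝ) • v := by funext i; simp
  rw [h, norm2_smul]; simp

lemma nml_neg {d : ℕ} (v : Fin d → ℝ) : nml (-v) = -nml v := by
  unfold nml; rw [norm2_neg]; funext i; simp

lemma dotp_smul_right {d : ℕ} (c : ℝ) (u v : Fin d → ℝ) : dotp u (c • v) = c * dotp u v := by
  simp [dotp, Finset.mul_sum]; apply Finset.sum_congr rfl; intros; ring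

lemma dotp_neg_left {d : ℕ} (u v : Fin d → ℝ) : dotp (-u) v = -dotp u v := by
  simp [dotp]

lemma norm2_nml_le_one {d : ℕ} (v : Fin d → ℝ) : norm2 (nml v) ≤ 1 := by
  unfold nml
  rw [norm2_smul]
  rcases eq_or_ne v 0 with h | h
  · subst h; simp [norm2]
  · have := norm2_pos h
    rw [abs_of_nonneg (by positivity), inv_mul_cancel₀ (ne_of_gt this)]

lemma nml_unit {d : ℕ} {v : Fin d → ℝ} (h : norm2 v = 1) : nml v = v := by
  unfold nml; rw [h]; simp

lemma exists_mulVec_repr {m n : ℕ} (A : Matrix (Fin m) (Fin n) ℝ) (v : Fin n → ℝ)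
    (hv : ∀ z : Fin n → ℝ, A.mulVec z = 0 → dotp v z = 0) :
    ∃ u : Fin n → ℝ, (Aᵀ * A).mulVec u = v := by
  classical
  set M := Aᵀ * A with hM
  have hMsymm : Mᵀ = M := by rw [hM, Matrix.transpose_mul, Matrix.transpose_transpose]
  have hker : ∀ z : Fin n → ℝ, M.mulVec z = 0 → A.mulVec z = 0 := by
    intro z hz
    have h0 : (A.mulVec z) ⬝ᵥ (A.mulVec z) = 0 := by
      rw [dotProduct_mulVec, ← Matrix.mulVec_transpose, Matrix.mulVec_mulVec, ← hM, hz]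
      simp
    have hsum : ∑ i, (A.mulVec z i) * (A.mulVec z i) = 0 := h0
    funext i
    have := (Finset.sum_eq_zero_iff_of_nonneg
      (fun i _ => mul_self_nonneg (A.mulVec z i))).1 hsum i (Finset.mem_univ i)
    have := mul_self_eq_zero.1 this
    simpa using this
  let f : EuclideanSpace ℝ (Fin n) →ₗ[ℝ] EuclideanSpace ℝ (Fin n) :=
    { toFun := fun z => WithLp.toLp 2 (M.mulVec z)
      map_add' := fun a b => by simp [Matrix.mulVec_add]
      map_smul' := fun c a => by simp [Matrix.mulVec_smul] }
  set K := LinearMap.ker f with hK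
  set W := LinearMap.range f with hW
  have hWK : W ≤ Kᗮ := by
    rintro w ⟨u, rfl⟩
    rw [Submodule.mem_orthogonal]
    intro z hz
    have hz' : M.mulVec z = 0 := by have := congrArg WithLp.ofLp (LinearMap.mem_ker.1 hz); exact this
    have h : (inner ℝ z (f u) : ℝ) = z ⬝ᵥ (M.mulVec u) := by
      simp [PiLp.inner_apply, RCLike.inner_apply, dotProduct, f]
      exact Finset.sum_congr rfl fun _ _ => mul_comm _ _
    rw [h, dotProduct_mulVec, ← Matrix.mulVec_transpose, hMsymm, hz']
    simp
  have hdim : Module.finrank ℝ W = Module.finrank ℝ Kᗮ := by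
    have h1 := Submodule.finrank_add_finrank_orthogonal (K := K)
    have h2 := LinearMap.finrank_range_add_finrank_ker f
    rw [← hK, ← hW] at h2
    omega
  have hWeq : W = Kᗮ := Submodule.eq_of_le_of_finrank_eq hWK hdim
  have hvmem : (WithLp.toLp 2 v : EuclideanSpace ℝ (Fin n)) ∈ Kᗮ := by
    rw [Submodule.mem_orthogonal]
    intro z hz
    have hz' : M.mulVec z = 0 := by have := congrArg WithLp.ofLp (LinearMap.mem_ker.1 hz); exact this
    have hAz := hker z.ofLp hz'
    have h := hv z.ofLp hAz
    have h2 : (inner ℝ z (WithLp.toLp 2 v : EuclideanSpace ℝ (Fin n)) : ℝ) = dotp v z := by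
      simp [PiLp.inner_apply, RCLike.inner_apply, dotp]
    rw [h2, h]
  rw [← hWeq] at hvmem
  obtain ⟨u, hu⟩ := hvmem
  exact ⟨u.ofLp, congrArg WithLp.ofLp hu⟩

def Gset {d : ℕ} {ι : Type} [Fintype ι] (A : Matrix (Fin d) ι ℝ) : Set ℝ :=
  { r : ℝ | ∃ y : Fin d → ℝ, (∃ x : ι → ℝ, A.mulVec x = y) ∧ y ≠ 0 ∧
    r = ⨅ j : ι, dotp (nml (mcol A j)) (nml y) }

lemma goffin_eq {d : ℕ} {ι : Type} [Fintype ι] (A : Matrix (Fin d) ι ℝ) :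
    goffin A = sSup (Gset A) := rfl

lemma gbddBelow {d : ℕ} {ι : Type} [Fintype ι] (g : ι → ℝ) : BddBelow (Set.range g) :=
  Set.Finite.bddBelow (Set.finite_range g)

lemma gBddAbove {d : ℕ} {ι : Type} [Fintype ι] [Nonempty ι] (A : Matrix (Fin d) ι ℝ) :
    BddAbove (Gset A) := by
  refine ⟨1, ?_⟩
  rintro r ⟨y, hy, hy0, rfl⟩
  obtain ⟨j0⟩ := ‹Nonempty ι›
  calc (⨅ j : ι, dotp (nml (mcol A j)) (nml y)) ≤ dotp (nml (mcol A j0)) (nml y) :=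
        ciInf_le (gbddBelow (d := d) _) j0
    _ ≤ norm2 (nml (mcol A j0)) * norm2 (nml y) := dotp_le_norm2 _ _
    _ ≤ 1 := by
        nlinarith [norm2_nml_le_one (mcol A j0), norm2_nml_le_one y,
          norm2_nonneg (nml (mcol A j0)), norm2_nonneg (nml y)]

lemma goffin_fromColumns_nonpos {m n : ℕ} (A : Matrix (Fin m) (Fin n) ℝ) (j0 : Fin n) :
    goffin (fromCols A (-A)) ≤ 0 := by
  rw [goffin_eq]
  apply Real.sSup_nonpos
  rintro r ⟨y, hy, hy0, rfl⟩
  set B := fromCols A (-A) with hB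
  have hinl : ∀ j, mcol B (Sum.inl j) = mcol A j := fun j => funext fun i => by
    simp [mcol, hB, fromCols_apply_inl]
  have hinr : ∀ j, mcol B (Sum.inr j) = -(mcol A j) := fun j => funext fun i => by
    simp [mcol, hB, fromCols_apply_inr]
  have h1 : (⨅ j, dotp (nml (mcol B j)) (nml y)) ≤ dotp (nml (mcol A j0)) (nml y) := by
    have := ciInf_le (gbddBelow (d := m) (fun j => dotp (nml (mcol B j)) (nml y))) (Sum.inl j0)
    rwa [hinl] at this
  have h2 : (⨅ j, dotp (nml (mcol B j)) (nml y)) ≤ -dotp (nml (mcol A j0)) (nml y) := by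
    have := ciInf_le (gbddBelow (d := m) (fun j => dotp (nml (mcol B j)) (nml y))) (Sum.inr j0)
    rwa [hinr, nml_neg, dotp_neg_left] at this
  linarith

lemma key_bound {m n : ℕ} (A : Matrix (Fin m) (Fin n) ℝ)
    (hcols : ∀ j, norm2 (mcol A j) = 1) (y : Fin m → ℝ)
    (hy : ∃ u : Fin n → ℝ, A.mulVec u = y) (hy0 : y ≠ 0) (j0 : Fin n) :
    ∃ j : Fin n, |goffin (fromCols A (-A))| * norm2 y ≤ |dotp (mcol A j) y| := by
  haveI : Nonempty (Fin n) := ⟨j0⟩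
  set B := fromCols A (-A) with hB
  have hinl : ∀ j, mcol B (Sum.inl j) = mcol A j := fun j => funext fun i => by
    simp [mcol, hB, fromCols_apply_inl]
  have hinr : ∀ j, mcol B (Sum.inr j) = -(mcol A j) := fun j => funext fun i => by
    simp [mcol, hB, fromCols_apply_inr]
  set c := (norm2 y)⁻¹ with hc
  have hcpos : 0 < c := inv_pos.2 (norm2_pos hy0)
  set g := fun j : Fin n ⊕ Fin n => dotp (nml (mcol B j)) (nml y) with hg
  have hg_inl : ∀ j, g (Sum.inl j) = c * dotp (mcol A j) y := by
    intro j
    rw [hg]; simp only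
    rw [hinl, nml_unit (hcols j)]
    show dotp (mcol A j) (c • y) = c * dotp (mcol A j) y
    exact dotp_smul_right c _ y
  have hg_inr : ∀ j, g (Sum.inr j) = -(c * dotp (mcol A j) y) := by
    intro j
    rw [hg]; simp only
    rw [hinr, nml_neg, dotp_neg_left, nml_unit (hcols j)]
    show -dotp (mcol A j) (c • y) = _
    rw [dotp_smul_right c _ y]
  obtain ⟨u, hu⟩ := hy
  have rmem : (⨅ j, g j) ∈ Gset B := by
    refine ⟨y, ⟨Sum.elim u 0, ?_⟩, hy0, rfl⟩
    rw [hB, fromCols_mulVec_sumElim, hu, Matrix.mulVec_zero, add_zero]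
  have hle : (⨅ j, g j) ≤ goffin B := le_csSup (gBddAbove B) rmem
  have hnonpos : goffin B ≤ 0 := goffin_fromColumns_nonpos A j0
  obtain ⟨j', hj'⟩ := Finite.exists_min g
  have hinf : (⨅ j, g j) = g j' :=
    le_antisymm (ciInf_le (gbddBelow (d := m) g) j') (le_ciInf hj')
  have habs : |goffin B| ≤ |g j'| := by
    rw [abs_of_nonpos hnonpos]
    rw [hinf] at hle
    calc -goffin B ≤ -g j' := by linarith
      _ ≤ |g j'| := neg_le_abs _
  have key : ∀ j : Fin n, |g (Sum.inl j)| = c * |dotp (mcol A j) y| ∧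
      |g (Sum.inr j)| = c * |dotp (mcol A j) y| := by
    intro j
    rw [hg_inl, hg_inr, abs_neg, abs_mul, abs_of_pos hcpos]
    exact ⟨rfl, rfl⟩
  have final : ∀ j : Fin n, |goffin B| ≤ c * |dotp (mcol A j) y| →
      |goffin B| * norm2 y ≤ |dotp (mcol A j) y| := by
    intro j hj
    have hny : 0 < norm2 y := norm2_pos hy0
    have := mul_le_mul_of_nonneg_right hj hny.le
    rwa [mul_assoc, mul_comm (|dotp (mcol A j) y|), ← mul_assoc, hc,
      inv_mul_cancel₀ hny.ne', one_mul] at this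
  cases j' with
  | inl j => exact ⟨j, final j (habs.trans_eq (key j).1)⟩
  | inr j => exact ⟨j, final j (habs.trans_eq (key j).2)⟩

lemma goffin_fromColumns_le {m n : ℕ} (A : Matrix (Fin m) (Fin n) ℝ)
    (j0 : Fin n) (hcol0 : mcol A j0 ≠ 0) :
    goffin (fromCols A (-A)) ≤ goffin A := by
  haveI : Nonempty (Fin n) := ⟨j0⟩
  rw [goffin_eq, goffin_eq]
  set B := fromCols A (-A) with hB
  have hinl : ∀ j, mcol B (Sum.inl j) = mcol A j := fun j => funext fun i => by
    simp [mcol, hB, fromCols_apply_inl]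
  apply csSup_le
  · refine ⟨⨅ j : Fin n ⊕ Fin n, dotp (nml (mcol B j)) (nml (mcol A j0)),
      mcol A j0, ⟨Sum.elim (Pi.single j0 1) 0, ?_⟩, hcol0, rfl⟩
    rw [hB, fromCols_mulVec_sumElim, Matrix.mulVec_zero, add_zero,
      Matrix.mulVec_single]
    funext i; simp [mcol]
  · rintro r ⟨y, ⟨x2, hx2⟩, hy0, rfl⟩
    have h1 : (⨅ j : Fin n ⊕ Fin n, dotp (nml (mcol B j)) (nml y)) ≤
        ⨅ j : Fin n, dotp (nml (mcol A j)) (nml y) := by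
      apply le_ciInf
      intro j
      have := ciInf_le (gbddBelow (d := m)
        (fun j : Fin n ⊕ Fin n => dotp (nml (mcol B j)) (nml y))) (Sum.inl j)
      rwa [hinl] at this
    refine h1.trans (le_csSup (gBddAbove A) ?_)
    refine ⟨y, ⟨(fun j => x2 (Sum.inl j)) - (fun j => x2 (Sum.inr j)), ?_⟩, hy0, rfl⟩
    have hx2' : x2 = Sum.elim (fun j => x2 (Sum.inl j)) (fun j => x2 (Sum.inr j)) := by
      funext j; cases j <;> rfl
    rw [hx2', hB, fromCols_mulVec_sumElim, Matrix.neg_mulVec] at hx2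
    rw [Matrix.mulVec_sub, ← hx2]
    abel

/-- Lemma 2.3: if all columns of `A` have unit norm, `x ≥ 1` componentwise and
`‖Ax‖ < |ρ_{(A,-A)}|`, then the orthogonal projection of `x` onto `ker(A)` is strictly
positive in every coordinate; in particular, if `ρ_A < 0`, this holds whenever
`‖Ax‖ < |ρ_A|`. -/
theorem kerProj_pos_of_small_norm
    {m n : ℕ} (A : Matrix (Fin m) (Fin n) ℝ)
    (hcols : ∀ j, norm2 (mcol A j) = 1)
    (x : Fin n → ℝ) (hx : ∀ j, 1 ≤ x j) :
    (norm2 (A.mulVec x) < |goffin (fromCols A (-A))| →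
      ∀ p : Fin n → ℝ, IsKerProj A x p → ∀ j, 0 < p j) ∧
    (goffin A < 0 → norm2 (A.mulVec x) < |goffin A| →
      ∀ p : Fin n → ℝ, IsKerProj A x p → ∀ j, 0 < p j) := by
  classical
  have main : norm2 (A.mulVec x) < |goffin (fromCols A (-A))| →
      ∀ p : Fin n → ℝ, IsKerProj A x p → ∀ j, 0 < p j := by
    intro h p hp j
    obtain ⟨hker, horth⟩ := hp
    obtain ⟨u, hu⟩ := exists_mulVec_repr A (x - p) horth
    set y := A.mulVec u with hy
    have hAty : Aᵀ.mulVec y = x - p := by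
      rw [hy, Matrix.mulVec_mulVec, hu]
    have hdotcol : ∀ i, dotp (mcol A i) y = (x - p) i := by
      intro i
      rw [← hAty]
      simp [dotp, Matrix.mulVec, dotProduct, mcol, Matrix.transpose_apply]
    by_contra hpj
    push_neg at hpj
    have hvj : 1 ≤ (x - p) j := by
      have := hx j; simp only [Pi.sub_apply]; linarith
    have hyne : y ≠ 0 := by
      intro h0
      have hc := hdotcol j
      rw [h0] at hc
      have hz : dotp (mcol A j) (0 : Fin m → ℝ) = 0 := by simp [dotp]
      rw [hz] at hc
      linarith [hvj, hc.ge, hc.le]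
    obtain ⟨j', hj'⟩ := key_bound A hcols y ⟨u, hy.symm⟩ hyne j
    have e1 : dotp (x - p) (x - p) = dotp y (A.mulVec x) := by
      rw [dotp_eq, dotp_eq]
      calc (x - p) ⬝ᵥ (x - p) = (Aᵀ *ᵥ y) ⬝ᵥ (x - p) := by rw [hAty]
        _ = y ⬝ᵥ (A *ᵥ (x - p)) := by
            rw [dotProduct_mulVec, ← Matrix.mulVec_transpose]
        _ = y ⬝ᵥ (A *ᵥ x) := by rw [Matrix.mulVec_sub, hker, sub_zero]
    have e2 : dotp y (A.mulVec x) ≤ norm2 y * norm2 (A.mulVec x) := dotp_le_norm2 _ _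
    have e3 : |dotp (mcol A j') y| ≤ norm2 (x - p) := by
      rw [hdotcol j']; exact abs_le_norm2 _ j'
    have e4 : 1 ≤ norm2 (x - p) := hvj.trans ((le_abs_self _).trans (abs_le_norm2 _ j))
    have e5 := dotp_self (x - p)
    have hny : 0 < norm2 y := norm2_pos hyne
    have f1 : |goffin (fromCols A (-A))| * norm2 y ≤ norm2 (x - p) := hj'.trans e3
    have f2 : norm2 (x - p) ≤ norm2 (x - p) * norm2 (x - p) :=
      le_mul_of_one_le_left (norm2_nonneg _) e4
    have f3 : norm2 (x - p) * norm2 (x - p) ≤ norm2 y * norm2 (A.mulVec x) := by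
      rw [← e5, e1]; exact e2
    have f4 : norm2 y * norm2 (A.mulVec x) < |goffin (fromCols A (-A))| * norm2 y := by
      rw [mul_comm (norm2 y)]
      exact mul_lt_mul_of_pos_right h hny
    linarith
  refine ⟨main, ?_⟩
  intro hneg h p hp j
  have hcol0 : mcol A j ≠ 0 := by
    intro h0
    have hc := hcols j
    rw [h0] at hc
    simp [norm2] at hc
  have hle : goffin (fromCols A (-A)) ≤ goffin A := goffin_fromColumns_le A j hcol0
  have habs : |goffin A| ≤ |goffin (fromCols A (-A))| := by
    rw [abs_of_neg hneg, abs_of_nonpos (goffin_fromColumns_nonpos A j)]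
    linarith
  exact main (lt_of_lt_of_le h habs) p hp j
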